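/- Let σ > 0, let m, d ≥ 1, and let η be an m×d random matrix whose rows are i.i.d. samples from the isotropic Gaussian N(0, σ²I_d). Then for every fixed β ∈ ℝ^d, with probability at least 3/4, ‖ηβ‖₁ ≤ σ·‖β‖₂·√(2m² ln 2 + 2m ln 4); since ‖β‖₂ ≤ ‖β‖₁, the same bound holds with ‖β‖₁ in place of ‖β‖₂. In particular, with σ = (2B/ε)√(2 ln(1.25/δ)) this bounds the ℓ₁ regularization coefficient ‖ηβ‖₁ incurred when ℓ₁ regression is solved on the noise-augmented private sketch. -/

import Mathlib

open Matrix MeasureTheory ProbabilityTheory BigOperators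
open scoped NNReal ENNReal

section GaussAux
open MeasureTheory ProbabilityTheory Real

lemma gauss_pdf_mul (v : ℝ≥0) (hv : v ≠ 0) (t x : ℝ) :
    gaussianPDFReal 0 v x * Real.exp (t * x)
      = Real.exp ((v:ℝ) * t ^ 2 / 2) * gaussianPDFReal (t * v) v x := by
  have hv' : (0:ℝ) < (v:ℝ) := by exact_mod_cast pos_iff_ne_zero.mpr hv
  simp only [gaussianPDFReal_def]
  have key : -(x - 0) ^ 2 / (2 * (v:ℝ)) + t * x
      = (v:ℝ) * t ^ 2 / 2 + -(x - t * (v:ℝ)) ^ 2 / (2 * (v:ℝ)) := by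
    field_simp
    ring
  rw [mul_assoc, ← Real.exp_add, key, Real.exp_add]
  ring

lemma gaussianPDF_eq_coe (v : ℝ≥0) : gaussianPDF 0 v
    = fun x => ((gaussianPDFReal 0 v x).toNNReal : ℝ≥0∞) := rfl

lemma integral_exp_gaussianReal (v : ℝ≥0) (t : ℝ) :
    ∫ x, Real.exp (t * x) ∂(gaussianReal 0 v) = Real.exp ((v:ℝ) * t ^ 2 / 2) := by
  by_cases hv : v = 0
  · simp [hv, integral_dirac]
  rw [gaussianReal_of_var_ne_zero _ hv]
  have hmeas : Measurable fun x => (gaussianPDFReal 0 v x).toNNReal :=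
    (measurable_gaussianPDFReal 0 v).real_toNNReal
  rw [gaussianPDF_eq_coe, integral_withDensity_eq_integral_smul hmeas]
  have heq : ∀ x, (gaussianPDFReal 0 v x).toNNReal • Real.exp (t * x)
      = Real.exp ((v:ℝ) * t ^ 2 / 2) * gaussianPDFReal (t * v) v x := by
    intro x
    rw [NNReal.smul_def, smul_eq_mul, Real.coe_toNNReal _ (gaussianPDFReal_nonneg 0 v x)]
    exact gauss_pdf_mul v hv t x
  simp_rw [heq]
  rw [integral_const_mul, integral_gaussianPDFReal_eq_one _ hv, mul_one]

lemma integrable_exp_gaussianReal (v : ℝ≥0) (t : ℝ) :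
    Integrable (fun x => Real.exp (t * x)) (gaussianReal 0 v) := by
  by_cases hv : v = 0
  · simp only [hv, gaussianReal_zero_var]
    refine ⟨((measurable_id'.const_mul t).exp).aestronglyMeasurable, ?_⟩
    rw [HasFiniteIntegral, lintegral_dirac]
    exact ENNReal.coe_lt_top
  rw [gaussianReal_of_var_ne_zero _ hv]
  have hmeas : Measurable fun x => (gaussianPDFReal 0 v x).toNNReal :=
    (measurable_gaussianPDFReal 0 v).real_toNNReal
  rw [gaussianPDF_eq_coe, integrable_withDensity_iff_integrable_smul hmeas]
  have heq : ∀ x, (gaussianPDFReal 0 v x).toNNReal • Real.exp (t * x)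
      = Real.exp ((v:ℝ) * t ^ 2 / 2) * gaussianPDFReal (t * v) v x := by
    intro x
    rw [NNReal.smul_def, smul_eq_mul, Real.coe_toNNReal _ (gaussianPDFReal_nonneg 0 v x)]
    exact gauss_pdf_mul v hv t x
  simp_rw [heq]
  exact (integrable_gaussianPDFReal (t*v) v).const_mul _

lemma map_mul_const_gauss {Ω : Type*} [MeasureSpace Ω] {f : Ω → ℝ} (hf : Measurable f)
    {v : ℝ≥0} (h : Measure.map f ℙ = gaussianReal 0 v) (c : ℝ) :
    Measure.map (fun ω => f ω * c) ℙ = gaussianReal 0 (NNReal.mk (c ^ 2) (sq_nonneg _) * v) := by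
  have heq : (fun ω => f ω * c) = (fun x : ℝ => x * c) ∘ f := rfl
  rw [heq, ← Measure.map_map (measurable_mul_const c) hf, h, gaussianReal_map_mul_const]
  simp

lemma sqrt_sum_sq_le_sum_abs {d : ℕ} (β : Fin d → ℝ) :
    Real.sqrt (∑ j, (β j) ^ 2) ≤ ∑ j, |β j| := by
  rw [show (∑ j, (β j) ^ 2) = ∑ j, |β j| ^ 2 by simp [sq_abs]]
  calc Real.sqrt (∑ j, |β j| ^ 2) ≤ Real.sqrt ((∑ j, |β j|) ^ 2) := by
        apply Real.sqrt_le_sqrt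
        exact Finset.sum_sq_le_sq_sum_of_nonneg (fun j _ => abs_nonneg _)
    _ = ∑ j, |β j| := Real.sqrt_sq (Finset.sum_nonneg fun j _ => abs_nonneg _)

lemma gauss_chernoff_calc (m : ℕ) (hm : 1 ≤ m) (s2 : ℝ) (hs2 : 0 < s2) :
    Real.exp (-(Real.sqrt s2 * Real.sqrt (2 * m ^ 2 * Real.log 2 + 2 * m * Real.log 4)
          / (m * s2)) * (Real.sqrt s2 * Real.sqrt (2 * m ^ 2 * Real.log 2 + 2 * m * Real.log 4)))
      * (2 * Real.exp (s2 * (Real.sqrt s2 * Real.sqrt (2 * m ^ 2 * Real.log 2 + 2 * m * Real.log 4)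
          / (m * s2)) ^ 2 / 2)) ^ m = 1/4 := by
  have hmpos : (0:ℝ) < m := by exact_mod_cast hm
  set R : ℝ := 2 * m ^ 2 * Real.log 2 + 2 * m * Real.log 4 with hR
  have hRnn : 0 ≤ R := by
    have h2 : (0:ℝ) < Real.log 2 := Real.log_pos (by norm_num)
    have h4 : (0:ℝ) < Real.log 4 := Real.log_pos (by norm_num)
    positivity
  have ht0sq : (Real.sqrt s2 * Real.sqrt R) ^ 2 = s2 * R := by
    rw [mul_pow, Real.sq_sqrt hs2.le, Real.sq_sqrt hRnn]
  set t0 : ℝ := Real.sqrt s2 * Real.sqrt R with ht0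
  have hcalc : -(t0 / (m * s2)) * t0 + (m : ℝ) * (s2 * (t0 / (m * s2)) ^ 2 / 2)
      = -((m:ℝ) * Real.log 2 + Real.log 4) := by
    have : -(t0 / (m * s2)) * t0 + (m : ℝ) * (s2 * (t0 / (m * s2)) ^ 2 / 2)
        = -(t0 ^ 2) / (2 * m * s2) := by
      field_simp
      ring
    rw [this, ht0sq, hR]
    field_simp
  rw [mul_pow, ← Real.exp_nat_mul, mul_left_comm, ← Real.exp_add, hcalc, Real.exp_neg,
    Real.exp_add, Real.exp_nat_mul, Real.exp_log (by norm_num : (0:ℝ) < 2),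
    Real.exp_log (by norm_num : (0:ℝ) < 4), mul_inv, ← mul_assoc,
    mul_inv_cancel₀ (by positivity : ((2:ℝ))^m ≠ 0), one_mul]
  norm_num

end GaussAux

theorem stmt15 {Ω : Type*} [MeasureSpace Ω] [IsProbabilityMeasure (ℙ : Measure Ω)]
    (σ : ℝ) (hσ : 0 < σ) (m d : ℕ) (hm : 1 ≤ m) (hd : 1 ≤ d)
    (η : Ω → Matrix (Fin m) (Fin d) ℝ)
    (hmeas : ∀ p : Fin m × Fin d, Measurable fun ω => η ω p.1 p.2)
    (hindep : iIndepFun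
      (fun (p : Fin m × Fin d) ω => η ω p.1 p.2) ℙ)
    (hlaw : ∀ p : Fin m × Fin d,
      Measure.map (fun ω => η ω p.1 p.2) ℙ = gaussianReal 0 (σ ^ 2).toNNReal)
    (β : Fin d → ℝ) :
    ℙ {ω | ∑ i, |(η ω).mulVec β i| ≤
        σ * Real.sqrt (∑ j, (β j) ^ 2) *
          Real.sqrt (2 * m ^ 2 * Real.log 2 + 2 * m * Real.log 4)} ≥ 3 / 4 ∧
    ℙ {ω | ∑ i, |(η ω).mulVec β i| ≤
        σ * (∑ j, |β j|) *
          Real.sqrt (2 * m ^ 2 * Real.log 2 + 2 * m * Real.log 4)} ≥ 3 / 4 := by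
  classical
  have hlog2 : (0:ℝ) < Real.log 2 := Real.log_pos (by norm_num)
  have hlog4 : (0:ℝ) < Real.log 4 := Real.log_pos (by norm_num)
  have hmpos : (0:ℝ) < (m:ℝ) := by exact_mod_cast hm
  set R : ℝ := 2 * (m:ℝ) ^ 2 * Real.log 2 + 2 * (m:ℝ) * Real.log 4 with hR
  have hRpos : 0 < R := by positivity
  suffices hfirst : ℙ {ω | ∑ i, |(η ω).mulVec β i| ≤
      σ * Real.sqrt (∑ j, (β j) ^ 2) * Real.sqrt R} ≥ 3 / 4 by
    refine ⟨hfirst, le_trans hfirst (measure_mono ?_)⟩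
    intro ω hω
    simp only [Set.mem_setOf_eq] at hω ⊢
    refine le_trans hω ?_
    have h1 := sqrt_sum_sq_le_sum_abs β
    gcongr
  by_cases hz : (∑ j, (β j) ^ 2) = 0
  · have hβ0 : ∀ j, β j = 0 := by
      intro j
      have := (Finset.sum_eq_zero_iff_of_nonneg (fun j _ => sq_nonneg (β j))).mp hz j
        (Finset.mem_univ j)
      exact pow_eq_zero_iff (n := 2) (by norm_num) |>.mp this
    have hset : {ω | ∑ i, |(η ω).mulVec β i| ≤
        σ * Real.sqrt (∑ j, (β j) ^ 2) * Real.sqrt R} = Set.univ := by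
      ext ω
      simp only [Set.mem_setOf_eq, Set.mem_univ, iff_true]
      have : ∀ i, (η ω).mulVec β i = 0 := by
        intro i; simp [Matrix.mulVec, dotProduct, hβ0]
      simp [this, hz]
    rw [hset, measure_univ]
    exact ENNReal.div_le_of_le_mul (by norm_num)
  have hsum_nonneg : (0:ℝ) ≤ ∑ j, (β j) ^ 2 := Finset.sum_nonneg fun j _ => sq_nonneg _
  have hsum_pos : (0:ℝ) < ∑ j, (β j) ^ 2 := lt_of_le_of_ne hsum_nonneg (Ne.symm hz)
  set s2 : ℝ := σ ^ 2 * ∑ j, (β j) ^ 2 with hs2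
  have hs2pos : 0 < s2 := by positivity
  set X : Fin m → Ω → ℝ := fun i ω => ∑ j, η ω i j * β j with hX
  set Y : Fin m → Ω → ℝ := fun i ω => |X i ω| with hY
  set t0 : ℝ := Real.sqrt s2 * Real.sqrt R with ht0
  set lam : ℝ := t0 / ((m:ℝ) * s2) with hlam
  have ht0nn : 0 ≤ t0 := by rw [ht0]; positivity
  have hlamnn : 0 ≤ lam := by rw [hlam]; positivity
  have hXmeas : ∀ i, Measurable (X i) :=
    fun i => Finset.measurable_sum _ fun j _ => (hmeas (i, j)).mul_const _
  have hYmeas : ∀ i, Measurable (Y i) := fun i => (hXmeas i).abs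
  -- per-row independence
  have hrow : ∀ i : Fin m,
      iIndepFun (fun j ω => η ω i j * β j) ℙ := by
    intro i
    have h1 : iIndepFun (fun j ω => η ω i j) ℙ := by
      rw [iIndepFun_iff_measure_inter_preimage_eq_mul]
      intro S sets hsets
      rw [iIndepFun_iff_measure_inter_preimage_eq_mul] at hindep
      have hinj : ∀ a ∈ S, ∀ b ∈ S, ((i, a) : Fin m × Fin d) = (i, b) → a = b := by
        intro a _ b _ h
        simpa using h
      have hmsets : ∀ p : Fin m × Fin d, p ∈ S.image (fun j => (i, j)) →
          MeasurableSet ((fun p : Fin m × Fin d => sets p.2) p) := by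
        intro p hp
        obtain ⟨j, hj, rfl⟩ := Finset.mem_image.mp hp
        exact hsets j hj
      have key := hindep (S.image fun j => (i, j)) (sets := fun p => sets p.2) hmsets
      rw [Finset.prod_image hinj] at key
      have hIeq : (⋂ p ∈ S.image (fun j => (i, j)),
            (fun ω => η ω p.1 p.2) ⁻¹' sets p.2)
          = ⋂ j ∈ S, (fun ω => η ω i j) ⁻¹' sets j := by
        ext ω
        simp only [Set.mem_iInter, Finset.mem_image, Set.mem_preimage]
        constructor
        · intro h j hj
          exact h (i, j) ⟨j, hj, rfl⟩
        · rintro h p ⟨j, hj, rfl⟩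
          exact h j hj
      rw [hIeq] at key
      exact key
    exact h1.comp (fun j x => x * β j) fun j => measurable_id.mul_const _
  -- laws and mgf of entries times coefficients
  have hWint : ∀ (i : Fin m) (j : Fin d) (t : ℝ),
      Integrable (fun ω => Real.exp (t * (η ω i j * β j))) ℙ := by
    intro i j t
    have hm' : AEMeasurable (fun ω => η ω i j * β j) ℙ :=
      ((hmeas (i, j)).mul_const _).aemeasurable
    have hlaw' : Measure.map (fun ω => η ω i j) ℙ = gaussianReal 0 (σ ^ 2).toNNReal :=
      hlaw (i, j)
    have h1 : Integrable (fun x => Real.exp (t * x))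
        (Measure.map (fun ω => η ω i j * β j) ℙ) := by
      rw [map_mul_const_gauss (hmeas (i, j)) hlaw' (β j)]
      exact integrable_exp_gaussianReal _ t
    exact (integrable_map_measure
      ((measurable_id'.const_mul t).exp).aestronglyMeasurable hm').mp h1
  have hWmgf : ∀ (i : Fin m) (j : Fin d) (t : ℝ),
      mgf (fun ω => η ω i j * β j) ℙ t = Real.exp ((β j) ^ 2 * σ ^ 2 * t ^ 2 / 2) := by
    intro i j t
    have hm' : AEMeasurable (fun ω => η ω i j * β j) ℙ :=
      ((hmeas (i, j)).mul_const _).aemeasurable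
    have hlaw' : Measure.map (fun ω => η ω i j) ℙ = gaussianReal 0 (σ ^ 2).toNNReal :=
      hlaw (i, j)
    rw [mgf, ← integral_map hm' ((measurable_id'.const_mul t).exp).aestronglyMeasurable,
      map_mul_const_gauss (hmeas (i, j)) hlaw' (β j)]
    rw [integral_exp_gaussianReal]
    congr 1
    rw [NNReal.coe_mul, Real.coe_toNNReal _ (sq_nonneg σ), NNReal.coe_mk]
  have hXeq : ∀ i, X i = ∑ j : Fin d, (fun ω => η ω i j * β j) := by
    intro i
    funext ω
    rw [hX]
    simp [Finset.sum_apply]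
  have hXmgf : ∀ (i : Fin m) (t : ℝ), mgf (X i) ℙ t = Real.exp (s2 * t ^ 2 / 2) := by
    intro i t
    rw [hXeq i, iIndepFun.mgf_sum (hrow i) (fun j => (hmeas (i, j)).mul_const _) Finset.univ]
    have : ∀ j : Fin d, mgf (fun ω => η ω i j * β j) ℙ t
        = Real.exp ((β j) ^ 2 * σ ^ 2 * t ^ 2 / 2) := fun j => hWmgf i j t
    rw [Finset.prod_congr rfl fun j _ => this j, ← Real.exp_sum]
    congr 1
    rw [← Finset.sum_div, ← Finset.sum_mul, ← Finset.sum_mul, hs2]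
    ring
  have hXint : ∀ (i : Fin m) (t : ℝ), Integrable (fun ω => Real.exp (t * X i ω)) ℙ := by
    intro i t
    have := iIndepFun.integrable_exp_mul_sum (hrow i)
      (fun j => (hmeas (i, j)).mul_const _) (s := Finset.univ) (fun j _ => hWint i j t)
    rw [hXeq i]
    exact this
  have hexp_abs : ∀ (t x : ℝ), Real.exp (t * |x|) ≤ Real.exp (t * x) + Real.exp (-t * x) := by
    intro t x
    rcases abs_cases x with ⟨h, _⟩ | ⟨h, _⟩
    · rw [h]; linarith [(Real.exp_pos (-t * x)).le]
    · rw [h, mul_neg, ← neg_mul]; linarith [(Real.exp_pos (t * x)).le]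
  have hYint : ∀ (i : Fin m) (t : ℝ), Integrable (fun ω => Real.exp (t * Y i ω)) ℙ := by
    intro i t
    refine Integrable.mono ((hXint i t).add (hXint i (-t)))
      (((hYmeas i).const_mul t).exp).aestronglyMeasurable ?_
    filter_upwards with ω
    simp only [Pi.add_apply]
    rw [Real.norm_eq_abs, Real.norm_eq_abs, abs_of_pos (Real.exp_pos _),
      abs_of_pos (by positivity)]
    have := hexp_abs t (X i ω)
    simpa [hY, neg_mul] using this
  have hYmgf_le : ∀ (i : Fin m) (t : ℝ), mgf (Y i) ℙ t ≤ 2 * Real.exp (s2 * t ^ 2 / 2) := by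
    intro i t
    have hle : mgf (Y i) ℙ t ≤ mgf (X i) ℙ t + mgf (X i) ℙ (-t) := by
      rw [mgf, mgf, mgf, ← integral_add (hXint i t) (hXint i (-t))]
      refine integral_mono (hYint i t) ((hXint i t).add (hXint i (-t))) ?_
      intro ω
      have := hexp_abs t (X i ω)
      simpa [hY, neg_mul] using this
    rw [hXmgf i t, hXmgf i (-t), neg_sq] at hle
    linarith
  have hsum_meas : ∀ s : Finset (Fin m), Measurable (∑ k ∈ s, Y k) := by
    intro s
    have he : (∑ k ∈ s, Y k) = fun a => ∑ k ∈ s, Y k a := by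
      funext a
      simp [Finset.sum_apply]
    rw [he]
    exact Finset.measurable_sum _ fun k _ => hYmeas k
  -- block independence
  have hblock : ∀ (i : Fin m) (s : Finset (Fin m)), i ∉ s →
      IndepFun (Y i) (∑ k ∈ s, Y k) ℙ := by
    intro i s his
    have hdisj : Disjoint (({i} : Finset (Fin m)) ×ˢ (Finset.univ : Finset (Fin d)))
        (s ×ˢ (Finset.univ : Finset (Fin d))) := by
      rw [Finset.disjoint_left]
      rintro ⟨a, b⟩ hab hab'
      simp only [Finset.mem_product, Finset.mem_singleton] at hab hab'
      exact his (hab.1 ▸ hab'.1)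
    have hIF := hindep.indepFun_finset _ _ hdisj hmeas
    have hφmem : ∀ j : Fin d, ((i, j) : Fin m × Fin d)
        ∈ ({i} : Finset (Fin m)) ×ˢ (Finset.univ : Finset (Fin d)) :=
      fun j => Finset.mem_product.mpr ⟨Finset.mem_singleton_self i, Finset.mem_univ j⟩
    have h1 : Y i = (fun v : (({i} : Finset (Fin m)) ×ˢ (Finset.univ : Finset (Fin d)) : Finset _) → ℝ
          => |∑ j : Fin d, v ⟨(i, j), hφmem j⟩ * β j|)
        ∘ (fun a (p : (({i} : Finset (Fin m)) ×ˢ (Finset.univ : Finset (Fin d)) : Finset _)) =>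
            η a (p : Fin m × Fin d).1 (p : Fin m × Fin d).2) := by
      funext a
      simp [hY, hX]
    have h2 : (∑ k ∈ s, Y k) = (fun v : (s ×ˢ (Finset.univ : Finset (Fin d)) : Finset _) → ℝ
          => ∑ k ∈ s.attach, |∑ j : Fin d,
              v ⟨(k.1, j), Finset.mem_product.mpr ⟨k.2, Finset.mem_univ j⟩⟩ * β j|)
        ∘ (fun a (p : (s ×ˢ (Finset.univ : Finset (Fin d)) : Finset _)) =>
            η a (p : Fin m × Fin d).1 (p : Fin m × Fin d).2) := by
      funext a
      rw [Finset.sum_apply, ← Finset.sum_attach s (fun k => Y k a)]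
      rfl
    rw [h1, h2]
    refine hIF.comp ?_ ?_
    · refine (Finset.measurable_sum Finset.univ fun j _ => ?_).abs
      exact (measurable_pi_apply _).mul_const _
    · refine Finset.measurable_sum _ fun k _ => ?_
      refine (Finset.measurable_sum Finset.univ fun j _ => ?_).abs
      exact (measurable_pi_apply _).mul_const _
  -- mgf of the total sum
  have hmain : ∀ s : Finset (Fin m),
      Integrable (fun ω => Real.exp (lam * (∑ i ∈ s, Y i) ω)) ℙ ∧
      mgf (∑ i ∈ s, Y i) ℙ lam ≤ (2 * Real.exp (s2 * lam ^ 2 / 2)) ^ s.card := by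
    intro s
    induction s using Finset.induction_on with
    | empty =>
      constructor
      · simpa using integrable_const (1 : ℝ)
      · simp [mgf]
    | insert _ _ his ih =>
      rename_i i s
      constructor
      · rw [Finset.sum_insert his]
        exact (hblock i s his).integrable_exp_mul_add (hYint i lam) ih.1
      · rw [Finset.sum_insert his,
          (hblock i s his).mgf_add' (hYmeas i).aestronglyMeasurable
            (hsum_meas s).aestronglyMeasurable,
          Finset.card_insert_of_notMem his, pow_succ']
        exact mul_le_mul (hYmgf_le i lam) ih.2 mgf_nonneg (by positivity)
  -- Chernoff bound
  have hcher := measure_ge_le_exp_mul_mgf (μ := ℙ) (X := ∑ i, Y i) t0 hlamnn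
    (hmain Finset.univ).1
  have hbound : (ℙ {ω | t0 ≤ (∑ i, Y i) ω}).toReal ≤ 1 / 4 := by
    refine hcher.trans ?_
    have h1 : mgf (∑ i, Y i) ℙ lam ≤ (2 * Real.exp (s2 * lam ^ 2 / 2)) ^ m := by
      have := (hmain Finset.univ).2
      rwa [Finset.card_univ, Fintype.card_fin] at this
    have h2 : Real.exp (-lam * t0) * mgf (∑ i, Y i) ℙ lam
        ≤ Real.exp (-lam * t0) * (2 * Real.exp (s2 * lam ^ 2 / 2)) ^ m :=
      mul_le_mul_of_nonneg_left h1 (Real.exp_pos _).le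
    refine h2.trans ?_
    rw [hlam, ht0, hR]
    exact le_of_eq (gauss_chernoff_calc m hm s2 hs2pos)
  have h14 : ℙ {ω | t0 ≤ (∑ i, Y i) ω} ≤ 1 / 4 := by
    rw [← ENNReal.ofReal_toReal (measure_ne_top ℙ _)]
    refine le_trans (ENNReal.ofReal_le_ofReal hbound) ?_
    rw [ENNReal.ofReal_div_of_pos (by norm_num)]
    norm_num
  have hAmeas : MeasurableSet {ω | (∑ i, Y i) ω ≤ t0} :=
    measurableSet_le (hsum_meas Finset.univ) measurable_const
  have hsetEq : {ω | ∑ i, |(η ω).mulVec β i| ≤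
      σ * Real.sqrt (∑ j, (β j) ^ 2) * Real.sqrt R} = {ω | (∑ i, Y i) ω ≤ t0} := by
    ext ω
    simp only [Set.mem_setOf_eq, Finset.sum_apply]
    have h1 : ∀ i, |(η ω).mulVec β i| = Y i ω := fun i => rfl
    have h2 : σ * Real.sqrt (∑ j, (β j) ^ 2) * Real.sqrt R = t0 := by
      rw [ht0, hs2, Real.sqrt_mul (sq_nonneg σ), Real.sqrt_sq hσ.le]
    rw [Finset.sum_congr rfl fun i _ => h1 i, h2]
  rw [hsetEq]
  have hcompl : {ω | (∑ i, Y i) ω ≤ t0}ᶜ ⊆ {ω | t0 ≤ (∑ i, Y i) ω} := by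
    intro ω h
    simp only [Set.mem_compl_iff, Set.mem_setOf_eq, not_le] at h
    exact h.le
  have hc : ℙ ({ω | (∑ i, Y i) ω ≤ t0}ᶜ) ≤ 1 / 4 := le_trans (measure_mono hcompl) h14
  have htot := measure_add_measure_compl (μ := ℙ) hAmeas
  rw [measure_univ] at htot
  have hge : (1 : ℝ≥0∞) ≤ ℙ {ω | (∑ i, Y i) ω ≤ t0} + 1 / 4 := by
    calc (1 : ℝ≥0∞) = ℙ {ω | (∑ i, Y i) ω ≤ t0} + ℙ ({ω | (∑ i, Y i) ω ≤ t0}ᶜ) := htot.symm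
      _ ≤ ℙ {ω | (∑ i, Y i) ω ≤ t0} + 1 / 4 := add_le_add_right hc _
  have h34 : (3 / 4 : ℝ≥0∞) = 1 - 1 / 4 :=
    (ENNReal.sub_eq_of_eq_add (by norm_num) (by
      rw [ENNReal.div_add_div_same]
      norm_num
      exact (ENNReal.div_self (by norm_num) (by norm_num)).symm)).symm
  rw [ge_iff_le, h34]
  exact tsub_le_iff_right.mpr hge
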